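/- Let H be a real Hilbert space, T : H → H nonexpansive, (β_n), (λ_n) ⊂ (0,1], x₀ ∈ H, and let (x_n) be generated by the (T-KM) iteration. Let N ∈ ℕ∖{0} satisfy N ≥ max{‖x₀ − p‖, ‖p‖} for some p ∈ Fix T, let ℓ ∈ ℕ∖{0} and let b, D, B, L : ℕ → ℕ be monotone functions satisfying (Q2), (Q3), (Q4), (Q5), (Q6). Then for all k ∈ ℕ and all n ≥ ν₂(k) one has ‖T(x_n) − x_n‖ ≤ 1/(k+1), where ν₂(k) := max{b(4Nℓ(k+1)−1), ν₁(2ℓ(k+1)−1)}, with ν₁(k) := D(G(3k+2) + ⌈ln(6N(k+1))⌉) + 1 and G(k) := max{B(4N(k+1)−1), L(10N(k+1)−1)}. -/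

import Mathlib

open Finset

private lemma unfold_rec (a c e : ℕ → ℝ) (hc0 : ∀ i, 0 ≤ c i)
    (hc1 : ∀ i, c i ≤ 1) (he : ∀ i, 0 ≤ e i)
    (hrec : ∀ i, a (i + 1) ≤ c (i + 1) * a i + e (i + 1)) :
    ∀ m n, m ≤ n → a n ≤ (∏ i ∈ Ioc m n, c i) * a m + ∑ i ∈ Ioc m n, e i := by
  intro m n h
  induction n, h using Nat.le_induction with
  | base => simp
  | succ n hmn ih =>
    have hP : (0:ℝ) ≤ ∏ i ∈ Ioc m n, c i := Finset.prod_nonneg fun i _ => hc0 i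
    have hS : (0:ℝ) ≤ ∑ i ∈ Ioc m n, e i := Finset.sum_nonneg fun i _ => he i
    have hsum : ∑ i ∈ Ioc m (n+1), e i = (∑ i ∈ Ioc m n, e i) + e (n+1) :=
      Finset.sum_Ioc_succ_top hmn e
    have hprod : ∏ i ∈ Ioc m (n+1), c i = (∏ i ∈ Ioc m n, c i) * c (n+1) :=
      Finset.prod_Ioc_succ_top hmn c
    have h1 := hrec n
    rw [hsum, hprod]
    nlinarith [hc0 (n+1), hc1 (n+1), mul_le_mul_of_nonneg_left ih (hc0 (n+1))]

/-- `G(k) := max{B(4N(k+1)−1), L(10N(k+1)−1)}`. -/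
def Gfun (N : ℕ) (B L : ℕ → ℕ) (k : ℕ) : ℕ :=
  max (B (4 * N * (k + 1) - 1)) (L (10 * N * (k + 1) - 1))

/-- `ν₁(k) := D(G(3k+2) + ⌈ln(6N(k+1))⌉) + 1`. -/
noncomputable def nu1 (N : ℕ) (D B L : ℕ → ℕ) (k : ℕ) : ℕ :=
  D (Gfun N B L (3 * k + 2) + Nat.ceil (Real.log (6 * (N : ℝ) * (k + 1)))) + 1


/-- `ν₂(k) := max{b(4Nℓ(k+1)−1), ν₁(2ℓ(k+1)−1)}`. -/
noncomputable def nu2 (N l : ℕ) (b D B L : ℕ → ℕ) (k : ℕ) : ℕ :=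
  max (b (4 * N * l * (k + 1) - 1)) (nu1 N D B L (2 * l * (k + 1) - 1))

section Aux

variable {H : Type*} [NormedAddCommGroup H] [NormedSpace ℝ H]
    (T : H → H) (β lam : ℕ → ℝ) (x : ℕ → H) (N : ℕ) (p : H)

private lemma tkm_bounds
    (hT : ∀ a b : H, ‖T a - T b‖ ≤ ‖a - b‖)
    (hβ : ∀ n, β n ∈ Set.Ioc (0 : ℝ) 1)
    (hlam : ∀ n, lam n ∈ Set.Ioc (0 : ℝ) 1)
    (hx : ∀ n, x (n + 1) = β n • x n + lam n • (T (β n • x n) - β n • x n))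
    (hp : T p = p)
    (hNp : max ‖x 0 - p‖ ‖p‖ ≤ (N : ℝ)) :
    ∀ n, ‖x n - p‖ ≤ (N:ℝ) ∧ ‖β n • x n - p‖ ≤ (N:ℝ) := by
  have hpN : ‖p‖ ≤ N := le_trans (le_max_right _ _) hNp
  have hustep : ∀ n : ℕ, ‖x n - p‖ ≤ N → ‖β n • x n - p‖ ≤ N := by
    intro n hxn
    have hb := hβ n
    have hform : β n • x n - p = β n • (x n - p) - (1 - β n) • p := by module
    rw [hform]
    calc ‖β n • (x n - p) - (1 - β n) • p‖ ≤ ‖β n • (x n - p)‖ + ‖(1 - β n) • p‖ :=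
          norm_sub_le _ _
      _ = β n * ‖x n - p‖ + (1 - β n) * ‖p‖ := by
          rw [norm_smul, norm_smul, Real.norm_of_nonneg hb.1.le,
            Real.norm_of_nonneg (by linarith [hb.2])]
      _ ≤ β n * N + (1 - β n) * N := by
          have h1 := hb.1; have h2 := hb.2
          have : (0:ℝ) ≤ 1 - β n := by linarith
          nlinarith
      _ = N := by ring
  have hxp : ∀ n, ‖x n - p‖ ≤ (N:ℝ) := by
    intro n
    induction n with
    | zero => exact le_trans (le_max_left _ _) hNp
    | succ n ih =>
      have hu : ‖β n • x n - p‖ ≤ N := hustep n ih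
      have hlm := hlam n
      have hform : x (n+1) - p
          = (1 - lam n) • (β n • x n - p) + lam n • (T (β n • x n) - p) := by
        rw [hx n]; module
      have hTup : ‖T (β n • x n) - p‖ ≤ N := by
        calc ‖T (β n • x n) - p‖ = ‖T (β n • x n) - T p‖ := by rw [hp]
          _ ≤ ‖β n • x n - p‖ := hT _ _
          _ ≤ N := hu
      rw [hform]
      calc ‖(1 - lam n) • (β n • x n - p) + lam n • (T (β n • x n) - p)‖
          ≤ ‖(1 - lam n) • (β n • x n - p)‖ + ‖lam n • (T (β n • x n) - p)‖ :=
            norm_add_le _ _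
        _ = (1 - lam n) * ‖β n • x n - p‖ + lam n * ‖T (β n • x n) - p‖ := by
            rw [norm_smul, norm_smul, Real.norm_of_nonneg (by linarith [hlm.2]),
              Real.norm_of_nonneg hlm.1.le]
        _ ≤ (1 - lam n) * N + lam n * N := by
            have h1 := hlm.1; have h2 := hlm.2
            nlinarith
        _ = N := by ring
  exact fun n => ⟨hxp n, hustep n (hxp n)⟩

private lemma tkm_rec
    (hT : ∀ a b : H, ‖T a - T b‖ ≤ ‖a - b‖)
    (hβ : ∀ n, β n ∈ Set.Ioc (0 : ℝ) 1)
    (hlam : ∀ n, lam n ∈ Set.Ioc (0 : ℝ) 1)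
    (hx : ∀ n, x (n + 1) = β n • x n + lam n • (T (β n • x n) - β n • x n))
    (hp : T p = p)
    (hNp : max ‖x 0 - p‖ ‖p‖ ≤ (N : ℝ)) :
    ∀ n : ℕ, ‖x (n+2) - x (n+1)‖
      ≤ β (n+1) * ‖x (n+1) - x n‖
        + 2*(N:ℝ) * (|β (n+1) - β n| + |lam (n+1) - lam n|) := by
  have hbd := tkm_bounds T β lam x N p hT hβ hlam hx hp hNp
  have hpN : ‖p‖ ≤ N := le_trans (le_max_right _ _) hNp
  have hxN2 : ∀ n, ‖x n‖ ≤ 2*(N:ℝ) := by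
    intro n
    calc ‖x n‖ = ‖(x n - p) + p‖ := by rw [sub_add_cancel]
      _ ≤ ‖x n - p‖ + ‖p‖ := norm_add_le _ _
      _ ≤ 2*N := by linarith [(hbd n).1]
  have hTuu : ∀ n, ‖T (β n • x n) - β n • x n‖ ≤ 2*(N:ℝ) := by
    intro n
    calc ‖T (β n • x n) - β n • x n‖
        = ‖(T (β n • x n) - T p) + (p - β n • x n)‖ := by rw [hp]; abel_nf
      _ ≤ ‖T (β n • x n) - T p‖ + ‖p - β n • x n‖ := norm_add_le _ _
      _ ≤ ‖β n • x n - p‖ + ‖β n • x n - p‖ := by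
          have h2 : ‖p - β n • x n‖ = ‖β n • x n - p‖ := norm_sub_rev _ _
          rw [h2]; exact add_le_add (hT _ _) le_rfl
      _ ≤ 2*N := by linarith [(hbd n).2]
  intro n
  have hb := hβ (n+1); have hlm := hlam (n+1)
  have hform : x (n+2) - x (n+1)
      = (1 - lam (n+1)) • (β (n+1) • x (n+1) - β n • x n)
        + lam (n+1) • (T (β (n+1) • x (n+1)) - T (β n • x n))
        + (lam (n+1) - lam n) • (T (β n • x n) - β n • x n) := by
    rw [hx (n+1), hx n]; module
  have hDu : ‖β (n+1) • x (n+1) - β n • x n‖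
      ≤ β (n+1) * ‖x (n+1) - x n‖ + |β (n+1) - β n| * (2*N) := by
    have hform2 : β (n+1) • x (n+1) - β n • x n
        = β (n+1) • (x (n+1) - x n) + (β (n+1) - β n) • x n := by module
    rw [hform2]
    calc ‖β (n+1) • (x (n+1) - x n) + (β (n+1) - β n) • x n‖
        ≤ ‖β (n+1) • (x (n+1) - x n)‖ + ‖(β (n+1) - β n) • x n‖ := norm_add_le _ _
      _ = β (n+1) * ‖x (n+1) - x n‖ + |β (n+1) - β n| * ‖x n‖ := by
          rw [norm_smul, norm_smul, Real.norm_of_nonneg hb.1.le, Real.norm_eq_abs]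
      _ ≤ β (n+1) * ‖x (n+1) - x n‖ + |β (n+1) - β n| * (2*N) := by
          have := hxN2 n
          nlinarith [abs_nonneg (β (n+1) - β n)]
  have hTle : ‖T (β (n+1) • x (n+1)) - T (β n • x n)‖
      ≤ ‖β (n+1) • x (n+1) - β n • x n‖ := hT _ _
  rw [hform]
  have step1 : ‖(1 - lam (n+1)) • (β (n+1) • x (n+1) - β n • x n)
        + lam (n+1) • (T (β (n+1) • x (n+1)) - T (β n • x n))
        + (lam (n+1) - lam n) • (T (β n • x n) - β n • x n)‖
      ≤ (1 - lam (n+1)) * ‖β (n+1) • x (n+1) - β n • x n‖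
        + lam (n+1) * ‖T (β (n+1) • x (n+1)) - T (β n • x n)‖
        + |lam (n+1) - lam n| * ‖T (β n • x n) - β n • x n‖ := by
    refine le_trans (norm_add_le _ _) ?_
    refine add_le_add (le_trans (norm_add_le _ _) ?_) ?_
    · refine add_le_add (le_of_eq ?_) (le_of_eq ?_)
      · rw [norm_smul, Real.norm_of_nonneg (by linarith [hlm.2])]
      · rw [norm_smul, Real.norm_of_nonneg hlm.1.le]
    · rw [norm_smul, Real.norm_eq_abs]
  refine le_trans step1 ?_
  have h1 := hlm.1; have h2 := hlm.2
  have h3 := hTuu n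
  nlinarith [norm_nonneg (β (n+1) • x (n+1) - β n • x n), hDu,
    abs_nonneg (lam (n+1) - lam n), norm_nonneg (T (β n • x n) - β n • x n),
    abs_nonneg (β (n+1) - β n),
    mul_le_mul_of_nonneg_left hTle h1.le,
    mul_le_mul_of_nonneg_left h3 (abs_nonneg (lam (n+1) - lam n))]

private lemma tkm_rate1
    (hT : ∀ a b : H, ‖T a - T b‖ ≤ ‖a - b‖)
    (hβ : ∀ n, β n ∈ Set.Ioc (0 : ℝ) 1)
    (hlam : ∀ n, lam n ∈ Set.Ioc (0 : ℝ) 1)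
    (hx : ∀ n, x (n + 1) = β n • x n + lam n • (T (β n • x n) - β n • x n))
    (hN : 0 < N)
    (hp : T p = p)
    (hNp : max ‖x 0 - p‖ ‖p‖ ≤ (N : ℝ))
    (D B L : ℕ → ℕ)
    (hQ3 : ∀ k : ℕ, (k : ℝ) ≤ ∑ i ∈ Finset.Icc 1 (D k), (1 - β i))
    (hQ4 : ∀ k n : ℕ, ∑ i ∈ Finset.Icc (B k + 1) (B k + n), |β i - β (i - 1)| ≤ 1 / (k + 1))
    (hQ6 : ∀ k n : ℕ, ∑ i ∈ Finset.Icc (L k + 1) (L k + n), |lam i - lam (i - 1)| ≤ 1 / (k + 1)) :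
    ∀ k n : ℕ, nu1 N D B L k ≤ n → ‖x (n+1) - x n‖ ≤ 1/((k:ℝ)+1) := by
  have hN1 : (1:ℝ) ≤ N := by exact_mod_cast hN
  have hbd := tkm_bounds T β lam x N p hT hβ hlam hx hp hNp
  have hrec := tkm_rec T β lam x N p hT hβ hlam hx hp hNp
  have hdx2N : ∀ n, ‖x (n+1) - x n‖ ≤ 2*(N:ℝ) := by
    intro n
    calc ‖x (n+1) - x n‖ = ‖(x (n+1) - p) - (x n - p)‖ := by abel_nf
      _ ≤ ‖x (n+1) - p‖ + ‖x n - p‖ := norm_sub_le _ _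
      _ ≤ 2*N := by linarith [(hbd (n+1)).1, (hbd n).1]
  intro k n hn
  set t : ℝ := (k:ℝ) + 1 with htdef
  have ht1 : (1:ℝ) ≤ t := by
    rw [htdef]; have : (0:ℝ) ≤ (k:ℝ) := Nat.cast_nonneg k; linarith
  have ht0 : (0:ℝ) < t := by linarith
  set m := Gfun N B L (3*k+2) with hmdef
  set c := Nat.ceil (Real.log (6 * (N : ℝ) * ((k:ℝ) + 1))) with hcdef
  have hnu : nu1 N D B L k = D (m + c) + 1 := rfl
  rw [hnu] at hn
  set K := m + c with hKdef
  have hlogpos : 0 < Real.log (6 * (N : ℝ) * ((k:ℝ) + 1)) := by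
    apply Real.log_pos
    nlinarith
  have hcpos : 0 < c := by
    rw [hcdef]
    exact Nat.ceil_pos.mpr hlogpos
  -- D K > K
  have hQ3K := hQ3 K
  have hβ01 : ∀ i, 0 ≤ 1 - β i ∧ 1 - β i < 1 := fun i => ⟨by linarith [(hβ i).2], by linarith [(hβ i).1]⟩
  have hDK : K < D K := by
    rcases Nat.eq_zero_or_pos (D K) with h0 | hpos
    · rw [h0] at hQ3K
      simp at hQ3K
      omega
    · have hne : (Finset.Icc 1 (D K)).Nonempty :=
        ⟨1, Finset.mem_Icc.mpr ⟨le_refl 1, by omega⟩⟩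
      have hlt : ∑ i ∈ Finset.Icc 1 (D K), (1 - β i) < ∑ i ∈ Finset.Icc 1 (D K), (1:ℝ) :=
        Finset.sum_lt_sum_of_nonempty hne fun i _ => (hβ01 i).2
      have hcard : ∑ i ∈ Finset.Icc 1 (D K), (1:ℝ) = (D K : ℝ) := by
        rw [Finset.sum_const]
        simp [Nat.card_Icc]
      rw [hcard] at hlt
      exact_mod_cast lt_of_le_of_lt hQ3K hlt
  have hmK : m ≤ K := Nat.le_add_right m c
  have hDKn : D K ≤ n := by omega
  have hmn : m ≤ n := le_trans (le_trans hmK hDK.le) hDKn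
  -- unfolding
  have h0 := unfold_rec (fun i => ‖x (i+1) - x i‖) β
      (fun i => 2*(N:ℝ) * (|β i - β (i-1)| + |lam i - lam (i-1)|))
      (fun i => (hβ i).1.le) (fun i => (hβ i).2)
      (fun i => by positivity)
      (fun i => by simpa using hrec i) m n hmn
  -- product bound
  have hprodle : (∏ i ∈ Ioc m n, β i) ≤ Real.exp (-(∑ i ∈ Ioc m n, (1 - β i))) := by
    have h1 : ∀ i ∈ Ioc m n, β i ≤ Real.exp (-(1 - β i)) := by
      intro i _
      have := Real.add_one_le_exp (-(1 - β i))
      linarith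
    calc (∏ i ∈ Ioc m n, β i) ≤ ∏ i ∈ Ioc m n, Real.exp (-(1 - β i)) :=
          Finset.prod_le_prod (fun i _ => (hβ i).1.le) h1
      _ = Real.exp (∑ i ∈ Ioc m n, -(1 - β i)) := (Real.exp_sum _ _).symm
      _ = Real.exp (-(∑ i ∈ Ioc m n, (1 - β i))) := by rw [Finset.sum_neg_distrib]
  -- lower bound on the sum of 1 - β i
  have hsumlb : Real.log (6 * (N : ℝ) * ((k:ℝ) + 1)) ≤ ∑ i ∈ Ioc m n, (1 - β i) := by
    have hsplit : (∑ i ∈ Ioc 0 m, (1 - β i)) + (∑ i ∈ Ioc m (D K), (1 - β i))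
        = ∑ i ∈ Ioc 0 (D K), (1 - β i) :=
      Finset.sum_Ioc_consecutive _ (Nat.zero_le m) (le_trans hmK hDK.le)
    have hfull : (K:ℝ) ≤ ∑ i ∈ Ioc 0 (D K), (1 - β i) := by
      rw [← Finset.Icc_add_one_left_eq_Ioc]
      exact hQ3K
    have hinit : (∑ i ∈ Ioc 0 m, (1 - β i)) ≤ (m:ℝ) := by
      calc (∑ i ∈ Ioc 0 m, (1 - β i)) ≤ ∑ i ∈ Ioc 0 m, (1:ℝ) :=
            Finset.sum_le_sum fun i _ => (hβ01 i).2.le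
        _ = (m:ℝ) := by rw [Finset.sum_const]; simp [Nat.card_Ioc]
    have hmid : (c:ℝ) ≤ ∑ i ∈ Ioc m (D K), (1 - β i) := by
      have hKc : (K:ℝ) = (m:ℝ) + (c:ℝ) := by exact_mod_cast rfl
      linarith
    have hext : (∑ i ∈ Ioc m (D K), (1 - β i)) ≤ ∑ i ∈ Ioc m n, (1 - β i) := by
      apply Finset.sum_le_sum_of_subset_of_nonneg (Finset.Ioc_subset_Ioc_right hDKn)
      intro i _ _
      exact (hβ01 i).1
    have hclog : Real.log (6 * (N : ℝ) * ((k:ℝ) + 1)) ≤ (c:ℝ) := Nat.le_ceil _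
    linarith
  have hexple : Real.exp (-(∑ i ∈ Ioc m n, (1 - β i))) ≤ 1 / (6 * (N:ℝ) * t) := by
    have h1 : Real.exp (-(∑ i ∈ Ioc m n, (1 - β i)))
        ≤ Real.exp (-(Real.log (6 * (N : ℝ) * ((k:ℝ) + 1)))) :=
      Real.exp_le_exp.mpr (neg_le_neg hsumlb)
    have h2 : Real.exp (-(Real.log (6 * (N : ℝ) * ((k:ℝ) + 1))))
        = 1 / (6 * (N:ℝ) * ((k:ℝ) + 1)) := by
      rw [Real.exp_neg, Real.exp_log (by positivity), one_div]
    rw [htdef]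
    rw [h2] at h1
    exact h1
  -- bound on Δβ sum
  have hβsum : ∑ i ∈ Ioc m n, |β i - β (i-1)| ≤ 1 / (12 * (N:ℝ) * t) := by
    set j := 4*N*((3*k+2)+1) - 1 with hjdef
    have hBm : B j ≤ m := le_max_left _ _
    have hBn : B j ≤ n := le_trans hBm hmn
    have hsub : Ioc m n ⊆ Ioc (B j) n := Finset.Ioc_subset_Ioc_left hBm
    have h1 : ∑ i ∈ Ioc m n, |β i - β (i-1)| ≤ ∑ i ∈ Ioc (B j) n, |β i - β (i-1)| :=
      Finset.sum_le_sum_of_subset_of_nonneg hsub fun i _ _ => abs_nonneg _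
    have h2 : ∑ i ∈ Ioc (B j) n, |β i - β (i-1)| ≤ 1 / ((j:ℝ) + 1) := by
      have hrw : Ioc (B j) n = Finset.Icc (B j + 1) (B j + (n - B j)) := by
        rw [Nat.add_sub_cancel' hBn, Finset.Icc_add_one_left_eq_Ioc]
      rw [hrw]
      exact hQ4 j (n - B j)
    have hcast : ((j:ℝ) + 1) = 12 * (N:ℝ) * t := by
      rw [hjdef]
      have h4 : 1 ≤ 4*N*((3*k+2)+1) := Nat.one_le_iff_ne_zero.mpr (by positivity)
      push_cast [Nat.cast_sub h4]
      rw [htdef]; ring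
    rw [hcast] at h2
    linarith
  have hlsum : ∑ i ∈ Ioc m n, |lam i - lam (i-1)| ≤ 1 / (30 * (N:ℝ) * t) := by
    set j := 10*N*((3*k+2)+1) - 1 with hjdef
    have hLm : L j ≤ m := le_max_right _ _
    have hLn : L j ≤ n := le_trans hLm hmn
    have hsub : Ioc m n ⊆ Ioc (L j) n := Finset.Ioc_subset_Ioc_left hLm
    have h1 : ∑ i ∈ Ioc m n, |lam i - lam (i-1)| ≤ ∑ i ∈ Ioc (L j) n, |lam i - lam (i-1)| :=
      Finset.sum_le_sum_of_subset_of_nonneg hsub fun i _ _ => abs_nonneg _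
    have h2 : ∑ i ∈ Ioc (L j) n, |lam i - lam (i-1)| ≤ 1 / ((j:ℝ) + 1) := by
      have hrw : Ioc (L j) n = Finset.Icc (L j + 1) (L j + (n - L j)) := by
        rw [Nat.add_sub_cancel' hLn, Finset.Icc_add_one_left_eq_Ioc]
      rw [hrw]
      exact hQ6 j (n - L j)
    have hcast : ((j:ℝ) + 1) = 30 * (N:ℝ) * t := by
      rw [hjdef]
      have h4 : 1 ≤ 10*N*((3*k+2)+1) := Nat.one_le_iff_ne_zero.mpr (by positivity)
      push_cast [Nat.cast_sub h4]
      rw [htdef]; ring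
    rw [hcast] at h2
    linarith
  -- assemble
  have hesum : ∑ i ∈ Ioc m n, 2*(N:ℝ) * (|β i - β (i-1)| + |lam i - lam (i-1)|)
      = 2*(N:ℝ) * ((∑ i ∈ Ioc m n, |β i - β (i-1)|) + ∑ i ∈ Ioc m n, |lam i - lam (i-1)|) := by
    rw [← Finset.mul_sum, Finset.sum_add_distrib]
  have hP0 : (0:ℝ) ≤ ∏ i ∈ Ioc m n, β i := Finset.prod_nonneg fun i _ => (hβ i).1.le
  have ham : ‖x (m+1) - x m‖ ≤ 2*(N:ℝ) := hdx2N m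
  have hPam : (∏ i ∈ Ioc m n, β i) * ‖x (m+1) - x m‖ ≤ (1 / (6 * (N:ℝ) * t)) * (2*(N:ℝ)) := by
    apply mul_le_mul (le_trans hprodle hexple) ham (norm_nonneg _) (by positivity)
  have hsums : 2*(N:ℝ) * ((∑ i ∈ Ioc m n, |β i - β (i-1)|) + ∑ i ∈ Ioc m n, |lam i - lam (i-1)|)
      ≤ 2*(N:ℝ) * (1 / (12 * (N:ℝ) * t) + 1 / (30 * (N:ℝ) * t)) := by
    apply mul_le_mul_of_nonneg_left (add_le_add hβsum hlsum) (by positivity)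
  have hfinal : (1 / (6 * (N:ℝ) * t)) * (2*(N:ℝ))
      + 2*(N:ℝ) * (1 / (12 * (N:ℝ) * t) + 1 / (30 * (N:ℝ) * t)) ≤ 1 / t := by
    have hNpos : (0:ℝ) < N := by linarith
    have h6 : (1 / (6 * (N:ℝ) * t)) * (2*(N:ℝ)) = 1/(3*t) := by
      field_simp; ring
    have h7 : 2*(N:ℝ) * (1 / (12 * (N:ℝ) * t) + 1 / (30 * (N:ℝ) * t))
        = 1/(6*t) + 1/(15*t) := by
      field_simp; ring
    rw [h6, h7]
    have h8 : 1/(3*t) + (1/(6*t) + 1/(15*t)) = 17/(30*t) := by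
      field_simp; ring
    rw [h8, div_le_div_iff₀ (by positivity) ht0]
    nlinarith
  calc ‖x (n+1) - x n‖
      ≤ (∏ i ∈ Ioc m n, β i) * ‖x (m+1) - x m‖
        + ∑ i ∈ Ioc m n, 2*(N:ℝ) * (|β i - β (i-1)| + |lam i - lam (i-1)|) := h0
    _ ≤ (1 / (6 * (N:ℝ) * t)) * (2*(N:ℝ))
        + 2*(N:ℝ) * (1 / (12 * (N:ℝ) * t) + 1 / (30 * (N:ℝ) * t)) := by
        rw [hesum]; exact add_le_add hPam hsums
    _ ≤ 1 / t := hfinal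

set_option maxHeartbeats 1000000 in
set_option maxHeartbeats 1000000 in
private lemma tkm_final
    (hT : ∀ a b : H, ‖T a - T b‖ ≤ ‖a - b‖)
    (hβ : ∀ n, β n ∈ Set.Ioc (0 : ℝ) 1)
    (hlam : ∀ n, lam n ∈ Set.Ioc (0 : ℝ) 1)
    (hx : ∀ n, x (n + 1) = β n • x n + lam n • (T (β n • x n) - β n • x n))
    (hN : 0 < N)
    (hp : T p = p)
    (hNp : max ‖x 0 - p‖ ‖p‖ ≤ (N : ℝ))
    (l : ℕ) (hl : 0 < l)
    (b D B L : ℕ → ℕ)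
    (hQ2 : ∀ k n : ℕ, b k ≤ n → |1 - β n| ≤ 1 / (k + 1))
    (hQ5 : ∀ n : ℕ, 1 / (l : ℝ) ≤ lam n)
    (hQ3 : ∀ k : ℕ, (k : ℝ) ≤ ∑ i ∈ Finset.Icc 1 (D k), (1 - β i))
    (hQ4 : ∀ k n : ℕ, ∑ i ∈ Finset.Icc (B k + 1) (B k + n), |β i - β (i - 1)| ≤ 1 / (k + 1))
    (hQ6 : ∀ k n : ℕ, ∑ i ∈ Finset.Icc (L k + 1) (L k + n), |lam i - lam (i - 1)| ≤ 1 / (k + 1)) :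
    ∀ k n : ℕ, nu2 N l b D B L k ≤ n → ‖T (x n) - x n‖ ≤ 1 / (k + 1) := by
  have hN1 : (1:ℝ) ≤ N := by exact_mod_cast hN
  have hl1 : (1:ℝ) ≤ l := by exact_mod_cast hl
  have hpN : ‖p‖ ≤ N := le_trans (le_max_right _ _) hNp
  have hbd := tkm_bounds T β lam x N p hT hβ hlam hx hp hNp
  have rate1 := tkm_rate1 T β lam x N p hT hβ hlam hx hN hp hNp D B L hQ3 hQ4 hQ6
  have hxN2 : ∀ n, ‖x n‖ ≤ 2*(N:ℝ) := by
    intro n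
    calc ‖x n‖ = ‖(x n - p) + p‖ := by rw [sub_add_cancel]
      _ ≤ ‖x n - p‖ + ‖p‖ := norm_add_le _ _
      _ ≤ 2*N := by linarith [(hbd n).1]
  intro k n hn
  have hb1 : b (4*N*l*(k+1) - 1) ≤ n := le_trans (le_max_left _ _) hn
  have hb2 : nu1 N D B L (2*l*(k+1) - 1) ≤ n := le_trans (le_max_right _ _) hn
  have ht : (0:ℝ) < (k:ℝ) + 1 := by positivity
  have hc1 : ((4*N*l*(k+1) - 1 : ℕ) : ℝ) + 1 = 4*(N:ℝ)*(l:ℝ)*((k:ℝ)+1) := by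
    have h4 : 1 ≤ 4*N*l*(k+1) := Nat.one_le_iff_ne_zero.mpr (by positivity)
    push_cast [Nat.cast_sub h4]
    ring
  have hβn : |1 - β n| ≤ 1 / (4*(N:ℝ)*(l:ℝ)*((k:ℝ)+1)) := by
    have := hQ2 (4*N*l*(k+1) - 1) n hb1
    rwa [hc1] at this
  have hc2 : ((2*l*(k+1) - 1 : ℕ) : ℝ) + 1 = 2*(l:ℝ)*((k:ℝ)+1) := by
    have h4 : 1 ≤ 2*l*(k+1) := Nat.one_le_iff_ne_zero.mpr (by positivity)
    push_cast [Nat.cast_sub h4]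
    ring
  have hdxn : ‖x (n+1) - x n‖ ≤ 1 / (2*(l:ℝ)*((k:ℝ)+1)) := by
    have := rate1 (2*l*(k+1) - 1) n hb2
    rwa [hc2] at this
  have hbn := hβ n; have hlmn := hlam n
  have hform : T (x n) - x n
      = (T (x n) - T (β n • x n)) + (1 - lam n) • (T (β n • x n) - β n • x n)
        + (x (n+1) - x n) := by
    rw [hx n]; module
  have hxu : ‖x n - β n • x n‖ = (1 - β n) * ‖x n‖ := by
    have h : x n - β n • x n = (1 - β n) • x n := by module
    rw [h, norm_smul, Real.norm_of_nonneg (by linarith [hbn.2])]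
  have hTxu : ‖T (x n) - T (β n • x n)‖ ≤ (1 - β n) * ‖x n‖ := by
    rw [← hxu]; exact hT _ _
  have hTuul : ‖T (β n • x n) - β n • x n‖
      ≤ (l:ℝ) * (‖x (n+1) - x n‖ + (1 - β n) * ‖x n‖) := by
    have hxu1 : x (n+1) - β n • x n = lam n • (T (β n • x n) - β n • x n) := by
      rw [hx n]; module
    have h1 : lam n * ‖T (β n • x n) - β n • x n‖ = ‖x (n+1) - β n • x n‖ := by
      rw [hxu1, norm_smul, Real.norm_of_nonneg hlmn.1.le]
    have h2 : ‖x (n+1) - β n • x n‖ ≤ ‖x (n+1) - x n‖ + (1 - β n) * ‖x n‖ := by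
      calc ‖x (n+1) - β n • x n‖ = ‖(x (n+1) - x n) + (x n - β n • x n)‖ := by abel_nf
        _ ≤ ‖x (n+1) - x n‖ + ‖x n - β n • x n‖ := norm_add_le _ _
        _ = ‖x (n+1) - x n‖ + (1 - β n) * ‖x n‖ := by rw [hxu]
    have h5 := hQ5 n
    have hlpos : (0:ℝ) < l := by linarith
    have h6 : 1 ≤ (l:ℝ) * lam n := by
      rw [div_le_iff₀ hlpos] at h5
      nlinarith
    have t0 : (0:ℝ) ≤ ‖T (β n • x n) - β n • x n‖ := norm_nonneg _
    calc ‖T (β n • x n) - β n • x n‖ = 1 * ‖T (β n • x n) - β n • x n‖ := (one_mul _).symm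
      _ ≤ ((l:ℝ) * lam n) * ‖T (β n • x n) - β n • x n‖ := mul_le_mul_of_nonneg_right h6 t0
      _ = (l:ℝ) * (lam n * ‖T (β n • x n) - β n • x n‖) := by ring
      _ = (l:ℝ) * ‖x (n+1) - β n • x n‖ := by rw [h1]
      _ ≤ (l:ℝ) * (‖x (n+1) - x n‖ + (1 - β n) * ‖x n‖) :=
          mul_le_mul_of_nonneg_left h2 (by positivity)
  rw [hform]
  have step : ‖(T (x n) - T (β n • x n)) + (1 - lam n) • (T (β n • x n) - β n • x n)
        + (x (n+1) - x n)‖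
      ≤ ‖T (x n) - T (β n • x n)‖ + (1 - lam n) * ‖T (β n • x n) - β n • x n‖
        + ‖x (n+1) - x n‖ := by
    refine le_trans (norm_add_le _ _) (add_le_add (le_trans (norm_add_le _ _)
      (add_le_add le_rfl (le_of_eq ?_))) le_rfl)
    rw [norm_smul, Real.norm_of_nonneg (by linarith [hlmn.2])]
  refine le_trans step ?_
  have h1b : 1 - β n ≤ 1 / (4*(N:ℝ)*(l:ℝ)*((k:ℝ)+1)) := le_trans (le_abs_self _) hβn
  have hxn2 := hxN2 n
  have h5 := hQ5 n
  have hlpos : (0:ℝ) < l := by linarith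
  have hlam1 : (1 - lam n) * (l:ℝ) ≤ (l:ℝ) - 1 := by
    rw [div_le_iff₀ hlpos] at h5
    nlinarith
  have hbx : (1 - β n) * ‖x n‖ ≤ 1 / (2*(l:ℝ)*((k:ℝ)+1)) := by
    have hb0 : (0:ℝ) ≤ 1 - β n := by linarith [hbn.2]
    have hx0 : (0:ℝ) ≤ ‖x n‖ := norm_nonneg _
    calc (1 - β n) * ‖x n‖ ≤ (1 / (4*(N:ℝ)*(l:ℝ)*((k:ℝ)+1))) * (2*N) := by
          apply mul_le_mul h1b hxn2 hx0 (by positivity)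
      _ = (2*(N:ℝ)) / (4*(N:ℝ)*(l:ℝ)*((k:ℝ)+1)) := by ring
      _ ≤ 1 / (2*(l:ℝ)*((k:ℝ)+1)) := by
          rw [div_le_div_iff₀ (by positivity) (by positivity)]
          nlinarith
  have hTf : (1 - lam n) * ‖T (β n • x n) - β n • x n‖
      ≤ ((l:ℝ) - 1) * (‖x (n+1) - x n‖ + (1 - β n) * ‖x n‖) := by
    have h0 : (0:ℝ) ≤ 1 - lam n := by linarith [hlmn.2]
    have h1 : (0:ℝ) ≤ ‖x (n+1) - x n‖ + (1 - β n) * ‖x n‖ := by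
      have := norm_nonneg (x (n+1) - x n)
      nlinarith [hbn.2, norm_nonneg (x n)]
    calc (1 - lam n) * ‖T (β n • x n) - β n • x n‖
        ≤ (1 - lam n) * ((l:ℝ) * (‖x (n+1) - x n‖ + (1 - β n) * ‖x n‖)) :=
          mul_le_mul_of_nonneg_left hTuul h0
      _ = ((1 - lam n) * (l:ℝ)) * (‖x (n+1) - x n‖ + (1 - β n) * ‖x n‖) := by ring
      _ ≤ ((l:ℝ) - 1) * (‖x (n+1) - x n‖ + (1 - β n) * ‖x n‖) :=
          mul_le_mul_of_nonneg_right hlam1 h1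
  have key : ‖T (x n) - T (β n • x n)‖ + (1 - lam n) * ‖T (β n • x n) - β n • x n‖
      + ‖x (n+1) - x n‖
      ≤ (l:ℝ) * ((1 - β n) * ‖x n‖ + ‖x (n+1) - x n‖) := by
    linarith [hTxu, hTf]
  refine le_trans key ?_
  have hfin : (l:ℝ) * ((1 - β n) * ‖x n‖ + ‖x (n+1) - x n‖)
      ≤ (l:ℝ) * (1 / (2*(l:ℝ)*((k:ℝ)+1)) + 1 / (2*(l:ℝ)*((k:ℝ)+1))) := by
    apply mul_le_mul_of_nonneg_left (add_le_add hbx hdxn) (by positivity)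
  refine le_trans hfin (le_of_eq ?_)
  have hk0 : ((k:ℝ)+1) ≠ 0 := by positivity
  have hl0 : (l:ℝ) ≠ 0 := by positivity
  field_simp
  try ring
  try exact Or.inl trivial

end Aux

/-- rate of asymptotic regularity `‖T(x_n) − x_n‖ → 0`
for the T-KM iteration. -/
theorem tkm_asymptotic_regularity
    {H : Type*} [NormedAddCommGroup H] [InnerProductSpace ℝ H] [CompleteSpace H]
    (T : H → H) (hT : ∀ a b : H, ‖T a - T b‖ ≤ ‖a - b‖)
    (β lam : ℕ → ℝ)
    (hβ : ∀ n, β n ∈ Set.Ioc (0 : ℝ) 1)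
    (hlam : ∀ n, lam n ∈ Set.Ioc (0 : ℝ) 1)
    (x : ℕ → H)
    (hx : ∀ n, x (n + 1) = β n • x n + lam n • (T (β n • x n) - β n • x n))
    (N : ℕ) (hN : 0 < N)
    (p : H) (hp : T p = p)
    (hNp : max ‖x 0 - p‖ ‖p‖ ≤ (N : ℝ))
    (l : ℕ) (hl : 0 < l)
    (b D B L : ℕ → ℕ)
    (hbmono : Monotone b) (hDmono : Monotone D) (hBmono : Monotone B) (hLmono : Monotone L)
    (hQ2 : ∀ k n : ℕ, b k ≤ n → |1 - β n| ≤ 1 / (k + 1))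
    (hQ5 : ∀ n : ℕ, 1 / (l : ℝ) ≤ lam n)
    (hQ3 : ∀ k : ℕ, (k : ℝ) ≤ ∑ i ∈ Finset.Icc 1 (D k), (1 - β i))
    (hQ4 : ∀ k n : ℕ, ∑ i ∈ Finset.Icc (B k + 1) (B k + n), |β i - β (i - 1)| ≤ 1 / (k + 1))
    (hQ6 : ∀ k n : ℕ, ∑ i ∈ Finset.Icc (L k + 1) (L k + n), |lam i - lam (i - 1)| ≤ 1 / (k + 1)) :
    ∀ k n : ℕ, nu2 N l b D B L k ≤ n → ‖T (x n) - x n‖ ≤ 1 / (k + 1) :=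
  tkm_final T β lam x N p hT hβ hlam hx hN hp hNp l hl b D B L hQ2 hQ5 hQ3 hQ4 hQ6
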